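/- Fix r ∈ (0,∞] and q > 0. Then lim_{u → 0+} Υ(u,r,q)/u = min{1/q, r, 1}/2. -/
import Mathlib


open MeasureTheory Filter Topology
open scoped ENNReal

/-- The function `Υ(u, r, q)` from the paper, with `r ∈ (0,∞]` encoded as `r : ℝ≥0∞`.
For `s := min {r, 1}` one has `1 / s = max {1 / r, 1}` (with `min {∞, 1} = 1` and
`max {1/∞, 1} = 1`), so the three regimes below match those of the paper. -/
noncomputable def Upsilon (u : ℝ) (r : ℝ≥0∞) (q : ℝ) : ℝ :=
  (1 / 2) *
    (if u + q < 1 / (min r 1).toReal then u * (min r 1).toReal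
     else if q < 1 / (min r 1).toReal then
       1 - (min r 1).toReal * q + Real.log ((u + q) * (min r 1).toReal)
     else Real.log (1 + u / q))

/-- For fixed `r` in `(0,oo]` and `q > 0`, `Upsilon u r q / u` tends to
`min {1/q, r, 1} / 2` as `u` tends to `0+` (with `min {1/q, oo} = 1/q`). -/
theorem stmt_13 (r : ℝ≥0∞) (q : ℝ) (hr : 0 < r) (hq : 0 < q) :
    Tendsto (fun u : ℝ => Upsilon u r q / u) (𝓝[>] 0)
      (𝓝 (min (1 / q) (min r 1).toReal / 2)) := by
  set s : ℝ := (min r 1).toReal with hs_def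
  have hmne : min r 1 ≠ 0 := (lt_min hr zero_lt_one).ne'
  have hmlt : min r 1 ≠ ⊤ := by
    have : min r 1 ≤ 1 := min_le_right _ _
    exact ne_top_of_le_ne_top (by simp) this
  have hs : 0 < s := ENNReal.toReal_pos hmne hmlt
  have hs1 : s ≤ 1 := by
    rw [hs_def, ← ENNReal.toReal_one]
    exact ENNReal.toReal_mono (by simp) (min_le_right _ _)
  by_cases hqs : q < 1 / s
  · -- small q case : eventually Upsilon = u * s / 2
    have hmin : min (1 / q) s = s := by
      apply min_eq_right
      rw [lt_div_iff₀ hs] at hqs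
      rw [le_div_iff₀ hq]
      nlinarith
    rw [hmin]
    have hev : ∀ᶠ u in 𝓝[>] (0 : ℝ), s / 2 = Upsilon u r q / u := by
      have hmem : Set.Ioo (0 : ℝ) (1 / s - q) ∈ 𝓝[>] (0 : ℝ) :=
        Ioo_mem_nhdsGT_of_mem ⟨le_rfl, by linarith⟩
      filter_upwards [hmem] with u hu
      have hlt : u + q < 1 / s := by
        have := hu.2; linarith
      have hu0 : u ≠ 0 := ne_of_gt hu.1
      rw [Upsilon, if_pos hlt]
      field_simp
      ring
    exact tendsto_const_nhds.congr' hev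
  · -- big q case : Upsilon = log(1 + u/q)/2 for u > 0
    push_neg at hqs
    have hmin : min (1 / q) s = 1 / q := by
      apply min_eq_left
      rw [div_le_iff₀ hs] at hqs
      rw [div_le_iff₀ hq]
      nlinarith
    rw [hmin]
    have hf : HasDerivAt (fun u : ℝ => Real.log (1 + u / q)) (1 / q) 0 := by
      have h1 : HasDerivAt (fun u : ℝ => 1 + u / q) (1 / q) 0 := by
        simpa using ((hasDerivAt_id (0 : ℝ)).div_const q).const_add 1
      have := h1.log (by simp)
      simpa using this
    rw [hasDerivAt_iff_tendsto_slope] at hf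
    have hsub : 𝓝[>] (0 : ℝ) ≤ 𝓝[≠] (0 : ℝ) :=
      nhdsWithin_mono 0 (fun x hx => ne_of_gt hx)
    have hslope : Tendsto (fun u : ℝ => Real.log (1 + u / q) / u) (𝓝[>] 0) (𝓝 (1 / q)) := by
      have := hf.mono_left hsub
      refine this.congr (fun u => ?_)
      simp [slope_def_field, div_eq_iff, Real.log_one]
    have hev : ∀ᶠ u in 𝓝[>] (0 : ℝ),
        Real.log (1 + u / q) / u / 2 = Upsilon u r q / u := by
      filter_upwards [self_mem_nhdsWithin] with u hu
      have hu0 : (0 : ℝ) < u := hu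
      have h1 : ¬ (u + q < 1 / s) := by
        push_neg; linarith
      have h2 : ¬ (q < 1 / s) := not_lt.2 hqs
      rw [Upsilon, if_neg h1, if_neg h2]
      ring
    exact (hslope.div_const 2).congr' hev
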